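/- Let Ω ⊆ ℝ² be open and let f : Ω → ℝ be positive and twice continuously differentiable. If W : Ω → 𝔻 is continuously differentiable and satisfies the main Vekua equation W_z̄ = (f_z̄/f)·W̄ on Ω, and if the function w := W_z − (f_z/f)·W̄ is continuously differentiable on Ω, then w satisfies the Vekua equation w_z̄ = −(f_z/f)·w̄ on Ω. -/

import Mathlib

noncomputable section

open Filter Topology MeasureTheory

/-- Hyperbolic (duplex) numbers 𝔻, modeled as pairs `(Re z, Im z)` with `j ^ 2 = 1`. -/
abbrev Hyp : Type := ℝ × ℝ

/-- Real part of a hyperbolic number. -/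
def hre (a : Hyp) : ℝ := a.1

/-- Imaginary part of a hyperbolic number. -/
def him (a : Hyp) : ℝ := a.2

/-- The hyperbolic imaginary unit `j`. -/
def hj : Hyp := (0, 1)

/-- Hyperbolic multiplication: `(x+tj)(x'+t'j) = (xx'+tt') + (xt'+tx')j`. -/
def hmul (a b : Hyp) : Hyp := (a.1 * b.1 + a.2 * b.2, a.1 * b.2 + a.2 * b.1)

/-- Hyperbolic conjugation: `conj (x+tj) = x - tj`. -/
def hconj (a : Hyp) : Hyp := (a.1, -a.2)

/-- Invertibility of a hyperbolic number: `x² ≠ t²`. -/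
def IsInv (a : Hyp) : Prop := a.1 ^ 2 ≠ a.2 ^ 2

/-- Hyperbolic inverse `z⁻¹ = z̄ / |z|²` with `|z|² = x² - t²`. -/
def hinv (a : Hyp) : Hyp := (a.1 / (a.1 ^ 2 - a.2 ^ 2), -a.2 / (a.1 ^ 2 - a.2 ^ 2))

/-- Hyperbolic division. -/
def hdiv (a b : Hyp) : Hyp := hmul a (hinv b)

/-- Partial derivative in the first (`x`) variable. -/
def pdx (g : Hyp → ℝ) (p : Hyp) : ℝ := deriv (fun s => g (s, p.2)) p.1

/-- Partial derivative in the second (`t`) variable. -/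
def pdt (g : Hyp → ℝ) (p : Hyp) : ℝ := deriv (fun s => g (p.1, s)) p.2

/-- The wave operator `□g = g_xx - g_tt`. -/
def waveOp (g : Hyp → ℝ) (p : Hyp) : ℝ := pdx (pdx g) p - pdt (pdt g) p

/-- `w_z = ½(∂_x + j ∂_t) w = ½((u_x+v_t) + (v_x+u_t)j)` for a 𝔻-valued `w = u + jv`. -/
def dz (w : Hyp → Hyp) (p : Hyp) : Hyp :=
  ((pdx (fun q => (w q).1) p + pdt (fun q => (w q).2) p) / 2,
   (pdx (fun q => (w q).2) p + pdt (fun q => (w q).1) p) / 2)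

/-- `w_z̄ = ½(∂_x - j ∂_t) w = ½((u_x-v_t) + (v_x-u_t)j)` for a 𝔻-valued `w = u + jv`. -/
def dzbar (w : Hyp → Hyp) (p : Hyp) : Hyp :=
  ((pdx (fun q => (w q).1) p - pdt (fun q => (w q).2) p) / 2,
   (pdx (fun q => (w q).2) p - pdt (fun q => (w q).1) p) / 2)

/-- `f_z = ½(f_x + j f_t)` for a real-valued `f`. -/
def rz (f : Hyp → ℝ) (p : Hyp) : Hyp := (pdx f p / 2, pdt f p / 2)

/-- `f_z̄ = ½(f_x - j f_t)` for a real-valued `f`. -/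
def rzbar (f : Hyp → ℝ) (p : Hyp) : Hyp := (pdx f p / 2, -(pdt f p) / 2)

/-- 𝔻-differentiability at `z₀`: the difference quotient `(f z - f z₀)·(z - z₀)⁻¹`
tends to `d` as `z → z₀` through points with `z - z₀` invertible. -/
def HasHDerivAt (f : Hyp → Hyp) (d : Hyp) (z₀ : Hyp) : Prop :=
  Filter.Tendsto (fun z => hmul (f z - f z₀) (hinv (z - z₀)))
    (nhdsWithin z₀ {z | IsInv (z - z₀)}) (nhds d)

/-- `F Ḡ - F̄ G`. -/
def pairDenom (F G : Hyp → Hyp) (z : Hyp) : Hyp :=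
  hmul (F z) (hconj (G z)) - hmul (hconj (F z)) (G z)

/-- Characteristic coefficient `a_(F,G) = -(F̄ G_z̄ - F_z̄ Ḡ)/(F Ḡ - F̄ G)`. -/
def aFG (F G : Hyp → Hyp) (z : Hyp) : Hyp :=
  - hdiv (hmul (hconj (F z)) (dzbar G z) - hmul (dzbar F z) (hconj (G z))) (pairDenom F G z)

/-- Characteristic coefficient `b_(F,G) = (F G_z̄ - F_z̄ G)/(F Ḡ - F̄ G)`. -/
def bFG (F G : Hyp → Hyp) (z : Hyp) : Hyp :=
  hdiv (hmul (F z) (dzbar G z) - hmul (dzbar F z) (G z)) (pairDenom F G z)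

/-- Characteristic coefficient `A_(F,G) = -(F̄ G_z - F_z Ḡ)/(F Ḡ - F̄ G)`. -/
def AFG (F G : Hyp → Hyp) (z : Hyp) : Hyp :=
  - hdiv (hmul (hconj (F z)) (dz G z) - hmul (dz F z) (hconj (G z))) (pairDenom F G z)

/-- Characteristic coefficient `B_(F,G) = (F G_z - F_z G)/(F Ḡ - F̄ G)`. -/
def BFG (F G : Hyp → Hyp) (z : Hyp) : Hyp :=
  hdiv (hmul (F z) (dz G z) - hmul (dz F z) (G z)) (pairDenom F G z)

/-- A generating pair on `Ω`: twice continuously differentiable `F, G` with `Im(F̄G) ≠ 0`. -/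
def IsGenPair (F G : Hyp → Hyp) (Ω : Set Hyp) : Prop :=
  ContDiffOn ℝ 2 F Ω ∧ ContDiffOn ℝ 2 G Ω ∧ ∀ z ∈ Ω, him (hmul (hconj (F z)) (G z)) ≠ 0

/-- The idempotent `e₁ = (1+j)/2`. -/
def e1 : Hyp := (1/2, 1/2)

/-- The idempotent `e₂ = (1-j)/2`. -/
def e2 : Hyp := (1/2, -1/2)

/-- Contour integral `∮_{∂R} h dz` over the counterclockwise boundary of the rectangle
`[x₁,x₂] × [t₁,t₂]`, with hyperbolic multiplication (`dz = dx` on horizontal sides,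
`dz = j dt` on vertical sides). -/
def rectContourInt (h : Hyp → Hyp) (x₁ x₂ t₁ t₂ : ℝ) : Hyp :=
  ((∫ x in x₁..x₂, h (x, t₁)) - ∫ x in x₁..x₂, h (x, t₂)) +
    hmul hj ((∫ t in t₁..t₂, h (x₂, t)) - ∫ t in t₁..t₂, h (x₁, t))

/-- Integral `∫_{[z₀,z]} h dζ` along the straight segment from `z₀` to `z`,
with hyperbolic multiplication. -/
def segInt (h : Hyp → Hyp) (z₀ z : Hyp) : Hyp :=
  ∫ s in (0:ℝ)..1, hmul (h (z₀ + s • (z - z₀))) (z - z₀)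

/-- Natural powers in 𝔻. -/
def hpow (a : Hyp) : ℕ → Hyp
  | 0 => (1, 0)
  | n + 1 => hmul a (hpow a n)

/-- Integer powers in 𝔻 (for invertible base). -/
def hzpow (a : Hyp) : ℤ → Hyp
  | Int.ofNat n => hpow a n
  | Int.negSucc n => hinv (hpow a (n + 1))

section VekuaAux

abbrev fstL : Hyp →L[ℝ] ℝ := ContinuousLinearMap.fst ℝ ℝ ℝ
abbrev sndL : Hyp →L[ℝ] ℝ := ContinuousLinearMap.snd ℝ ℝ ℝ

lemma lineX_hasDerivAt (p : Hyp) : HasDerivAt (fun s : ℝ => ((s, p.2) : Hyp)) ((1:ℝ), (0:ℝ)) p.1 :=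
  (hasDerivAt_id p.1).prodMk (hasDerivAt_const _ _)

lemma lineT_hasDerivAt (p : Hyp) : HasDerivAt (fun s : ℝ => ((p.1, s) : Hyp)) ((0:ℝ), (1:ℝ)) p.2 :=
  (hasDerivAt_const _ _).prodMk (hasDerivAt_id p.2)

lemma hasDerivAt_X {F : Type*} [NormedAddCommGroup F] [NormedSpace ℝ F]
    {g : Hyp → F} {L : Hyp →L[ℝ] F} {p : Hyp} (h : HasFDerivAt g L p) :
    HasDerivAt (fun s => g (s, p.2)) (L (1, 0)) p.1 := by
  have := h.comp_hasDerivAt p.1 (lineX_hasDerivAt p)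
  simpa [Function.comp_def] using this

lemma hasDerivAt_T {F : Type*} [NormedAddCommGroup F] [NormedSpace ℝ F]
    {g : Hyp → F} {L : Hyp →L[ℝ] F} {p : Hyp} (h : HasFDerivAt g L p) :
    HasDerivAt (fun s => g (p.1, s)) (L (0, 1)) p.2 := by
  have := h.comp_hasDerivAt p.2 (lineT_hasDerivAt p)
  simpa [Function.comp_def] using this

lemma clm_eq_basis (L : Hyp →L[ℝ] ℝ) : (L (1,0)) • fstL + (L (0,1)) • sndL = L := by
  apply ContinuousLinearMap.ext
  intro q
  have hq : (q : Hyp) = q.1 • ((1:ℝ),(0:ℝ)) + q.2 • ((0:ℝ),(1:ℝ)) := by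
    simp [Prod.ext_iff]
  simp only [ContinuousLinearMap.add_apply, ContinuousLinearMap.smul_apply]
  conv_rhs => rw [hq]
  rw [map_add, _root_.map_smul, _root_.map_smul]
  simp [mul_comm]

lemma pack {g : Hyp → ℝ} {q : Hyp} (h : DifferentiableAt ℝ g q) :
    HasFDerivAt g ((pdx g q) • fstL + (pdt g q) • sndL) q := by
  have h1 := h.hasFDerivAt
  have ex : pdx g q = fderiv ℝ g q (1,0) := (hasDerivAt_X h1).deriv
  have et : pdt g q = fderiv ℝ g q (0,1) := (hasDerivAt_T h1).deriv
  rw [ex, et, clm_eq_basis (fderiv ℝ g q)]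
  exact h1

lemma clairaut {g gx gt : Hyp → ℝ} {p : Hyp}
    (hgx : DifferentiableAt ℝ gx p) (hgt : DifferentiableAt ℝ gt p)
    (h : ∀ᶠ q in 𝓝 p, HasFDerivAt g ((gx q) • fstL + (gt q) • sndL) q) :
    ∃ gxx gxt gtt : ℝ,
      HasDerivAt (fun s => gx (s, p.2)) gxx p.1 ∧
      HasDerivAt (fun s => gt (s, p.2)) gxt p.1 ∧
      HasDerivAt (fun s => gx (p.1, s)) gxt p.2 ∧
      HasDerivAt (fun s => gt (p.1, s)) gtt p.2 := by
  set L : Hyp → (Hyp →L[ℝ] ℝ) := fun q => (gx q) • fstL + (gt q) • sndL with hLdef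
  have hLdiff : DifferentiableAt ℝ L p := (hgx.smul_const fstL).add (hgt.smul_const sndL)
  have hL' : HasFDerivAt L (fderiv ℝ L p) p := hLdiff.hasFDerivAt
  set L'' := fderiv ℝ L p with hL''def
  have hsym : L'' (1,0) (0,1) = L'' (0,1) (1,0) :=
    second_derivative_symmetric_of_eventually h hL' (1,0) (0,1)
  have evalx : ∀ vv : Hyp, HasDerivAt (fun s => L (s, p.2) vv) ((L'' (1,0)) vv) p.1 := by
    intro vv
    have h1 : HasDerivAt (fun s => L (s, p.2)) (L'' (1,0)) p.1 := hasDerivAt_X hL'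
    have h2 := (ContinuousLinearMap.apply ℝ ℝ vv).hasFDerivAt.comp_hasDerivAt p.1 h1
    simpa [Function.comp_def] using h2
  have evalt : ∀ vv : Hyp, HasDerivAt (fun s => L (p.1, s) vv) ((L'' (0,1)) vv) p.2 := by
    intro vv
    have h1 : HasDerivAt (fun s => L (p.1, s)) (L'' (0,1)) p.2 := hasDerivAt_T hL'
    have h2 := (ContinuousLinearMap.apply ℝ ℝ vv).hasFDerivAt.comp_hasDerivAt p.2 h1
    simpa [Function.comp_def] using h2
  have egx : ∀ q : Hyp, L q (1,0) = gx q := by intro q; simp [hLdef]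
  have egt : ∀ q : Hyp, L q (0,1) = gt q := by intro q; simp [hLdef]
  refine ⟨L'' (1,0) (1,0), L'' (1,0) (0,1), L'' (0,1) (0,1), ?_, ?_, ?_, ?_⟩
  · have := evalx (1,0); simpa only [egx] using this
  · have := evalx (0,1); simpa only [egt] using this
  · have := evalt (1,0); rw [← hsym] at this; simpa only [egx] using this
  · have := evalt (0,1); simpa only [egt] using this

lemma lineX_tendsto (p : Hyp) : Filter.Tendsto (fun s : ℝ => ((s, p.2) : Hyp)) (𝓝 p.1) (𝓝 p) :=
  (continuous_id.prodMk continuous_const).tendsto p.1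

lemma lineT_tendsto (p : Hyp) : Filter.Tendsto (fun s : ℝ => ((p.1, s) : Hyp)) (𝓝 p.2) (𝓝 p) :=
  (continuous_const.prodMk continuous_id).tendsto p.2

lemma core (p : Hyp) (u v f w1 w2 a b c d fx ft : Hyp → ℝ)
    (hfne : f p ≠ 0)
    (hLu : ∀ᶠ q in 𝓝 p, HasFDerivAt u (a q • fstL + b q • sndL) q)
    (hLv : ∀ᶠ q in 𝓝 p, HasFDerivAt v (c q • fstL + d q • sndL) q)
    (hLf : ∀ᶠ q in 𝓝 p, HasFDerivAt f (fx q • fstL + ft q • sndL) q)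
    (had : DifferentiableAt ℝ a p) (hbd : DifferentiableAt ℝ b p)
    (hcd : DifferentiableAt ℝ c p) (hdd : DifferentiableAt ℝ d p)
    (hfxd : DifferentiableAt ℝ fx p) (hftd : DifferentiableAt ℝ ft p)
    (hEV1 : ∀ᶠ q in 𝓝 p, (a q - d q) * f q = fx q * u q + ft q * v q)
    (hEV2 : ∀ᶠ q in 𝓝 p, (c q - b q) * f q = -(fx q * v q + ft q * u q))
    (hw1 : ∀ᶠ q in 𝓝 p, w1 q = (a q + d q)/2 - (fx q * u q - ft q * v q)/(2 * f q))
    (hw2 : ∀ᶠ q in 𝓝 p, w2 q = (b q + c q)/2 - (ft q * u q - fx q * v q)/(2 * f q)) :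
    (deriv (fun s => w1 (s, p.2)) p.1 - deriv (fun s => w2 (p.1, s)) p.2) * f p
        = ft p * w2 p - fx p * w1 p ∧
    (deriv (fun s => w2 (s, p.2)) p.1 - deriv (fun s => w1 (p.1, s)) p.2) * f p
        = fx p * w2 p - ft p * w1 p := by
  obtain ⟨uxx, uxt, utt, ha_x, hb_x, ha_t, hb_t⟩ := clairaut had hbd hLu
  obtain ⟨vxx, vxt, vtt, hc_x, hd_x, hc_t, hd_t⟩ := clairaut hcd hdd hLv
  obtain ⟨fxx, fxt, ftt, hfx_x, hft_x, hfx_t, hft_t⟩ := clairaut hfxd hftd hLf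
  -- first order line derivatives
  have hux : HasDerivAt (fun s => u (s, p.2)) (a p) p.1 := by
    simpa using hasDerivAt_X hLu.self_of_nhds
  have hut : HasDerivAt (fun s => u (p.1, s)) (b p) p.2 := by
    simpa using hasDerivAt_T hLu.self_of_nhds
  have hvx : HasDerivAt (fun s => v (s, p.2)) (c p) p.1 := by
    simpa using hasDerivAt_X hLv.self_of_nhds
  have hvt : HasDerivAt (fun s => v (p.1, s)) (d p) p.2 := by
    simpa using hasDerivAt_T hLv.self_of_nhds
  have hfX : HasDerivAt (fun s => f (s, p.2)) (fx p) p.1 := by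
    simpa using hasDerivAt_X hLf.self_of_nhds
  have hfT : HasDerivAt (fun s => f (p.1, s)) (ft p) p.2 := by
    simpa using hasDerivAt_T hLf.self_of_nhds
  -- the four differentiated constraints
  have hE1x : (uxx - vxt) * f p + (a p - d p) * fx p
      - ((fxx * u p + fx p * a p) + (fxt * v p + ft p * c p)) = 0 := by
    have h1 : HasDerivAt (fun s => (a (s, p.2) - d (s, p.2)) * f (s, p.2)
        - (fx (s, p.2) * u (s, p.2) + ft (s, p.2) * v (s, p.2)))
        ((uxx - vxt) * f p + (a p - d p) * fx p
          - ((fxx * u p + fx p * a p) + (fxt * v p + ft p * c p))) p.1 :=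
      ((ha_x.sub hd_x).mul hfX).sub ((hfx_x.mul hux).add (hft_x.mul hvx))
    have h0 : (fun s => (a (s, p.2) - d (s, p.2)) * f (s, p.2)
        - (fx (s, p.2) * u (s, p.2) + ft (s, p.2) * v (s, p.2))) =ᶠ[𝓝 p.1] fun _ => (0:ℝ) := by
      filter_upwards [(lineX_tendsto p).eventually hEV1] with s hs
      rw [hs, sub_self]
    have h2 : HasDerivAt (fun s => (a (s, p.2) - d (s, p.2)) * f (s, p.2)
        - (fx (s, p.2) * u (s, p.2) + ft (s, p.2) * v (s, p.2))) 0 p.1 :=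
      (hasDerivAt_const p.1 (0:ℝ)).congr_of_eventuallyEq h0
    exact h1.unique h2
  have hE1t : (uxt - vtt) * f p + (a p - d p) * ft p
      - ((fxt * u p + fx p * b p) + (ftt * v p + ft p * d p)) = 0 := by
    have h1 : HasDerivAt (fun s => (a (p.1, s) - d (p.1, s)) * f (p.1, s)
        - (fx (p.1, s) * u (p.1, s) + ft (p.1, s) * v (p.1, s)))
        ((uxt - vtt) * f p + (a p - d p) * ft p
          - ((fxt * u p + fx p * b p) + (ftt * v p + ft p * d p))) p.2 :=
      ((ha_t.sub hd_t).mul hfT).sub ((hfx_t.mul hut).add (hft_t.mul hvt))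
    have h0 : (fun s => (a (p.1, s) - d (p.1, s)) * f (p.1, s)
        - (fx (p.1, s) * u (p.1, s) + ft (p.1, s) * v (p.1, s))) =ᶠ[𝓝 p.2] fun _ => (0:ℝ) := by
      filter_upwards [(lineT_tendsto p).eventually hEV1] with s hs
      rw [hs, sub_self]
    have h2 := (hasDerivAt_const p.2 (0:ℝ)).congr_of_eventuallyEq h0
    exact h1.unique h2
  have hE2x : (vxx - uxt) * f p + (c p - b p) * fx p
      - (-((fxx * v p + fx p * c p) + (fxt * u p + ft p * a p))) = 0 := by
    have h1 : HasDerivAt (fun s => (c (s, p.2) - b (s, p.2)) * f (s, p.2)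
        - (-(fx (s, p.2) * v (s, p.2) + ft (s, p.2) * u (s, p.2))))
        ((vxx - uxt) * f p + (c p - b p) * fx p
          - (-((fxx * v p + fx p * c p) + (fxt * u p + ft p * a p)))) p.1 :=
      ((hc_x.sub hb_x).mul hfX).sub (((hfx_x.mul hvx).add (hft_x.mul hux)).neg)
    have h0 : (fun s => (c (s, p.2) - b (s, p.2)) * f (s, p.2)
        - (-(fx (s, p.2) * v (s, p.2) + ft (s, p.2) * u (s, p.2)))) =ᶠ[𝓝 p.1] fun _ => (0:ℝ) := by
      filter_upwards [(lineX_tendsto p).eventually hEV2] with s hs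
      rw [hs, sub_self]
    have h2 := (hasDerivAt_const p.1 (0:ℝ)).congr_of_eventuallyEq h0
    exact h1.unique h2
  have hE2t : (vxt - utt) * f p + (c p - b p) * ft p
      - (-((fxt * v p + fx p * d p) + (ftt * u p + ft p * b p))) = 0 := by
    have h1 : HasDerivAt (fun s => (c (p.1, s) - b (p.1, s)) * f (p.1, s)
        - (-(fx (p.1, s) * v (p.1, s) + ft (p.1, s) * u (p.1, s))))
        ((vxt - utt) * f p + (c p - b p) * ft p
          - (-((fxt * v p + fx p * d p) + (ftt * u p + ft p * b p)))) p.2 :=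
      ((hc_t.sub hb_t).mul hfT).sub (((hfx_t.mul hvt).add (hft_t.mul hut)).neg)
    have h0 : (fun s => (c (p.1, s) - b (p.1, s)) * f (p.1, s)
        - (-(fx (p.1, s) * v (p.1, s) + ft (p.1, s) * u (p.1, s)))) =ᶠ[𝓝 p.2] fun _ => (0:ℝ) := by
      filter_upwards [(lineT_tendsto p).eventually hEV2] with s hs
      rw [hs, sub_self]
    have h2 := (hasDerivAt_const p.2 (0:ℝ)).congr_of_eventuallyEq h0
    exact h1.unique h2
  -- value of EV at p itself and w at p
  have hEV1p := hEV1.self_of_nhds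
  have hEV2p := hEV2.self_of_nhds
  have hw1p := hw1.self_of_nhds
  have hw2p := hw2.self_of_nhds
  have h2fne : (2:ℝ) * f p ≠ 0 := mul_ne_zero two_ne_zero hfne
  -- derivatives of w1, w2 along the lines
  have Hw1x : HasDerivAt (fun s => w1 (s, p.2))
      ((uxx + vxt)/2 - (((fxx * u p + fx p * a p) - (fxt * v p + ft p * c p)) * (2 * f p)
        - (fx p * u p - ft p * v p) * (2 * fx p)) / (2 * f p)^2) p.1 := by
    have hD : HasDerivAt (fun s => (a (s,p.2) + d (s,p.2))/2
        - (fx (s,p.2) * u (s,p.2) - ft (s,p.2) * v (s,p.2))/(2 * f (s,p.2)))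
        ((uxx + vxt)/2 - (((fxx * u p + fx p * a p) - (fxt * v p + ft p * c p)) * (2 * f p)
          - (fx p * u p - ft p * v p) * (2 * fx p)) / (2 * f p)^2) p.1 :=
      ((ha_x.add hd_x).div_const 2).sub
        (((hfx_x.mul hux).sub (hft_x.mul hvx)).div (hfX.const_mul 2) h2fne)
    exact hD.congr_of_eventuallyEq ((lineX_tendsto p).eventually hw1)
  have Hw1t : HasDerivAt (fun s => w1 (p.1, s))
      ((uxt + vtt)/2 - (((fxt * u p + fx p * b p) - (ftt * v p + ft p * d p)) * (2 * f p)
        - (fx p * u p - ft p * v p) * (2 * ft p)) / (2 * f p)^2) p.2 := by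
    have hD : HasDerivAt (fun s => (a (p.1,s) + d (p.1,s))/2
        - (fx (p.1,s) * u (p.1,s) - ft (p.1,s) * v (p.1,s))/(2 * f (p.1,s)))
        ((uxt + vtt)/2 - (((fxt * u p + fx p * b p) - (ftt * v p + ft p * d p)) * (2 * f p)
          - (fx p * u p - ft p * v p) * (2 * ft p)) / (2 * f p)^2) p.2 :=
      ((ha_t.add hd_t).div_const 2).sub
        (((hfx_t.mul hut).sub (hft_t.mul hvt)).div (hfT.const_mul 2) h2fne)
    exact hD.congr_of_eventuallyEq ((lineT_tendsto p).eventually hw1)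
  have Hw2x : HasDerivAt (fun s => w2 (s, p.2))
      ((uxt + vxx)/2 - (((fxt * u p + ft p * a p) - (fxx * v p + fx p * c p)) * (2 * f p)
        - (ft p * u p - fx p * v p) * (2 * fx p)) / (2 * f p)^2) p.1 := by
    have hD : HasDerivAt (fun s => (b (s,p.2) + c (s,p.2))/2
        - (ft (s,p.2) * u (s,p.2) - fx (s,p.2) * v (s,p.2))/(2 * f (s,p.2)))
        ((uxt + vxx)/2 - (((fxt * u p + ft p * a p) - (fxx * v p + fx p * c p)) * (2 * f p)
          - (ft p * u p - fx p * v p) * (2 * fx p)) / (2 * f p)^2) p.1 :=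
      ((hb_x.add hc_x).div_const 2).sub
        (((hft_x.mul hux).sub (hfx_x.mul hvx)).div (hfX.const_mul 2) h2fne)
    exact hD.congr_of_eventuallyEq ((lineX_tendsto p).eventually hw2)
  have Hw2t : HasDerivAt (fun s => w2 (p.1, s))
      ((utt + vxt)/2 - (((ftt * u p + ft p * b p) - (fxt * v p + fx p * d p)) * (2 * f p)
        - (ft p * u p - fx p * v p) * (2 * ft p)) / (2 * f p)^2) p.2 := by
    have hD : HasDerivAt (fun s => (b (p.1,s) + c (p.1,s))/2
        - (ft (p.1,s) * u (p.1,s) - fx (p.1,s) * v (p.1,s))/(2 * f (p.1,s)))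
        ((utt + vxt)/2 - (((ftt * u p + ft p * b p) - (fxt * v p + fx p * d p)) * (2 * f p)
          - (ft p * u p - fx p * v p) * (2 * ft p)) / (2 * f p)^2) p.2 :=
      ((hb_t.add hc_t).div_const 2).sub
        (((hft_t.mul hut).sub (hfx_t.mul hvt)).div (hfT.const_mul 2) h2fne)
    exact hD.congr_of_eventuallyEq ((lineT_tendsto p).eventually hw2)
  rw [Hw1x.deriv, Hw1t.deriv, Hw2x.deriv, Hw2t.deriv, hw1p, hw2p]
  constructor
  · field_simp
    linear_combination (f p) * hE1x + (f p) * hE2t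
  · field_simp
    linear_combination (f p) * hE2x + (f p) * hE1t
      - (2 * ft p) * hEV1p - (2 * fx p) * hEV2p

end VekuaAux

set_option maxHeartbeats 2000000 in
/-- if `W ∈ C¹(Ω)` solves the main Vekua equation `W_z̄ = (f_z̄/f)W̄` and
`w = W_z − (f_z/f)W̄` is C¹, then `w` solves `w_z̄ = −(f_z/f)w̄` on `Ω`. -/
theorem FG_derivative_solves_successor_vekua (Ω : Set Hyp) (hΩ : IsOpen Ω)
    (f : Hyp → ℝ) (hf : ContDiffOn ℝ 2 f Ω) (hfpos : ∀ p ∈ Ω, 0 < f p)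
    (W : Hyp → Hyp) (hW : ContDiffOn ℝ 1 W Ω)
    (hMainVekua : ∀ p ∈ Ω, dzbar W p = hmul (hdiv (rzbar f p) (f p, 0)) (hconj (W p)))
    (w : Hyp → Hyp)
    (hwdef : ∀ p, w p = dz W p - hmul (hdiv (rz f p) (f p, 0)) (hconj (W p)))
    (hw : ContDiffOn ℝ 1 w Ω) :
    ∀ p ∈ Ω, dzbar w p = - hmul (hdiv (rz f p) (f p, 0)) (hconj (w p)) := by
  intro p hp
  have hmem : Ω ∈ 𝓝 p := hΩ.mem_nhds hp
  have hevΩ : ∀ᶠ q in 𝓝 p, q ∈ Ω := hmem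
  have hevpos : ∀ᶠ q in 𝓝 p, 0 < f q := by
    filter_upwards [hevΩ] with q hq using hfpos q hq
  have hfnep : f p ≠ 0 := (hfpos p hp).ne'
  have hWd : ∀ᶠ q in 𝓝 p, DifferentiableAt ℝ W q := by
    filter_upwards [hevΩ] with q hq
    exact (hW.differentiableOn one_ne_zero).differentiableAt (hΩ.mem_nhds hq)
  have hfd : ∀ᶠ q in 𝓝 p, DifferentiableAt ℝ f q := by
    filter_upwards [hevΩ] with q hq
    exact (hf.differentiableOn two_ne_zero).differentiableAt (hΩ.mem_nhds hq)
  -- packaged derivatives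
  have hLu : ∀ᶠ q in 𝓝 p, HasFDerivAt (fun q' => (W q').1)
      ((pdx (fun q' => (W q').1) q) • fstL + (pdt (fun q' => (W q').1) q) • sndL) q := by
    filter_upwards [hWd] with q hq using pack hq.fst
  have hLv : ∀ᶠ q in 𝓝 p, HasFDerivAt (fun q' => (W q').2)
      ((pdx (fun q' => (W q').2) q) • fstL + (pdt (fun q' => (W q').2) q) • sndL) q := by
    filter_upwards [hWd] with q hq using pack hq.snd
  have hLf : ∀ᶠ q in 𝓝 p, HasFDerivAt f ((pdx f q) • fstL + (pdt f q) • sndL) q := by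
    filter_upwards [hfd] with q hq using pack hq
  -- differentiability of pdx f, pdt f at p
  have hf2 : ContDiffAt ℝ 2 f p := hf.contDiffAt hmem
  have hfd1 : ContDiffAt ℝ 1 (fderiv ℝ f) p := hf2.fderiv_right (by norm_num)
  have hfxd : DifferentiableAt ℝ (fun q => pdx f q) p := by
    have h1 : ContDiffAt ℝ 1 (fun q => fderiv ℝ f q ((1:ℝ),(0:ℝ))) p :=
      hfd1.clm_apply contDiffAt_const
    refine (h1.differentiableAt one_ne_zero).congr_of_eventuallyEq ?_
    filter_upwards [hfd] with q hq
    exact (hasDerivAt_X hq.hasFDerivAt).deriv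
  have hftd : DifferentiableAt ℝ (fun q => pdt f q) p := by
    have h1 : ContDiffAt ℝ 1 (fun q => fderiv ℝ f q ((0:ℝ),(1:ℝ))) p :=
      hfd1.clm_apply contDiffAt_const
    refine (h1.differentiableAt one_ne_zero).congr_of_eventuallyEq ?_
    filter_upwards [hfd] with q hq
    exact (hasDerivAt_T hq.hasFDerivAt).deriv
  -- basic pointwise differentiabilities at p
  have hwp : DifferentiableAt ℝ w p := (hw.differentiableOn one_ne_zero).differentiableAt hmem
  have hup : DifferentiableAt ℝ (fun q => (W q).1) p := hWd.self_of_nhds.fst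
  have hvp : DifferentiableAt ℝ (fun q => (W q).2) p := hWd.self_of_nhds.snd
  have hfp : DifferentiableAt ℝ f p := hfd.self_of_nhds
  -- the Vekua equation, componentwise and cleared
  have hEV1 : ∀ᶠ q in 𝓝 p, (pdx (fun q' => (W q').1) q - pdt (fun q' => (W q').2) q) * f q
      = pdx f q * (W q).1 + pdt f q * (W q).2 := by
    filter_upwards [hevΩ, hevpos] with q hq hq0
    have h := congrArg Prod.fst (hMainVekua q hq)
    simp only [dzbar, hmul, hdiv, hinv, hconj, rzbar, neg_zero, zero_div, sub_zero,
      mul_zero, zero_mul, add_zero, zero_add, mul_neg, neg_mul] at h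
    field_simp at h
    have hfq : f q ≠ 0 := hq0.ne'
    apply mul_left_cancel₀ (show (2:ℝ) * f q ≠ 0 by positivity)
    linear_combination 2 * h
  have hEV2 : ∀ᶠ q in 𝓝 p, (pdx (fun q' => (W q').2) q - pdt (fun q' => (W q').1) q) * f q
      = -(pdx f q * (W q).2 + pdt f q * (W q).1) := by
    filter_upwards [hevΩ, hevpos] with q hq hq0
    have h := congrArg Prod.snd (hMainVekua q hq)
    simp only [dzbar, hmul, hdiv, hinv, hconj, rzbar, neg_zero, zero_div, sub_zero,
      mul_zero, zero_mul, add_zero, zero_add, mul_neg, neg_mul] at h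
    field_simp at h
    have hfq : f q ≠ 0 := hq0.ne'
    apply mul_left_cancel₀ (show (4:ℝ) * f q ^ 3 ≠ 0 by positivity)
    linear_combination 4 * f q ^ 2 * h
  -- w componentwise
  have hw1 : ∀ᶠ q in 𝓝 p, (w q).1
      = (pdx (fun q' => (W q').1) q + pdt (fun q' => (W q').2) q)/2
        - (pdx f q * (W q).1 - pdt f q * (W q).2)/(2 * f q) := by
    filter_upwards [hevpos] with q hq0
    have hfq : f q ≠ 0 := hq0.ne'
    have h := congrArg Prod.fst (hwdef q)
    simp only [dz, hmul, hdiv, hinv, hconj, rz, neg_zero, zero_div, sub_zero,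
      mul_zero, zero_mul, add_zero, zero_add, mul_neg, neg_mul, Prod.fst_sub] at h
    field_simp at h
    rw [div_sub_div _ _ two_ne_zero (show (2:ℝ) * f q ≠ 0 by positivity),
      eq_div_iff (show (2:ℝ) * (2 * f q) ≠ 0 by positivity)]
    apply mul_left_cancel₀ hfq
    linear_combination 2 * h
  have hw2 : ∀ᶠ q in 𝓝 p, (w q).2
      = (pdt (fun q' => (W q').1) q + pdx (fun q' => (W q').2) q)/2
        - (pdt f q * (W q).1 - pdx f q * (W q).2)/(2 * f q) := by
    filter_upwards [hevpos] with q hq0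
    have hfq : f q ≠ 0 := hq0.ne'
    have h := congrArg Prod.snd (hwdef q)
    simp only [dz, hmul, hdiv, hinv, hconj, rz, neg_zero, zero_div, sub_zero,
      mul_zero, zero_mul, add_zero, zero_add, mul_neg, neg_mul, Prod.snd_sub] at h
    field_simp at h
    rw [div_sub_div _ _ two_ne_zero (show (2:ℝ) * f q ≠ 0 by positivity),
      eq_div_iff (show (2:ℝ) * (2 * f q) ≠ 0 by positivity)]
    apply mul_left_cancel₀ (show (2:ℝ) * f q ^ 3 ≠ 0 by positivity)
    linear_combination 4 * f q ^ 2 * h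
  -- differentiability of auxiliary quotients at p
  have h2fne : (2:ℝ) * f p ≠ 0 := mul_ne_zero two_ne_zero hfnep
  have hPW : DifferentiableAt ℝ (fun q => (pdx f q * (W q).1 - pdt f q * (W q).2)/(2 * f q)) p := by
    simp only [div_eq_mul_inv]
    exact ((hfxd.mul hup).sub (hftd.mul hvp)).mul ((hfp.const_mul 2).inv h2fne)
  have hQW : DifferentiableAt ℝ (fun q => (pdx f q * (W q).1 + pdt f q * (W q).2)/(f q)) p := by
    simp only [div_eq_mul_inv]
    exact ((hfxd.mul hup).add (hftd.mul hvp)).mul (hfp.inv hfnep)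
  have hPW2 : DifferentiableAt ℝ (fun q => (pdt f q * (W q).1 - pdx f q * (W q).2)/(2 * f q)) p := by
    simp only [div_eq_mul_inv]
    exact ((hftd.mul hup).sub (hfxd.mul hvp)).mul ((hfp.const_mul 2).inv h2fne)
  have hQW2 : DifferentiableAt ℝ (fun q => (pdx f q * (W q).2 + pdt f q * (W q).1)/(f q)) p := by
    simp only [div_eq_mul_inv]
    exact ((hfxd.mul hvp).add (hftd.mul hup)).mul (hfp.inv hfnep)
  -- differentiability of the four partial derivative functions at p
  have had : DifferentiableAt ℝ (fun q => pdx (fun q' => (W q').1) q) p := by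
    refine ((hwp.fst.add hPW).add (hQW.const_mul ((2:ℝ)⁻¹))).congr_of_eventuallyEq ?_
    filter_upwards [hEV1, hw1, hevpos] with q h1 h2 hq0
    have hfq : f q ≠ 0 := hq0.ne'
    simp only [Pi.add_apply, Pi.sub_apply]
    rw [h2]
    field_simp
    linear_combination h1
  have hdd : DifferentiableAt ℝ (fun q => pdt (fun q' => (W q').2) q) p := by
    refine ((hwp.fst.add hPW).sub (hQW.const_mul ((2:ℝ)⁻¹))).congr_of_eventuallyEq ?_
    filter_upwards [hEV1, hw1, hevpos] with q h1 h2 hq0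
    have hfq : f q ≠ 0 := hq0.ne'
    simp only [Pi.add_apply, Pi.sub_apply]
    rw [h2]
    field_simp
    linear_combination (-1) * h1
  have hbd : DifferentiableAt ℝ (fun q => pdt (fun q' => (W q').1) q) p := by
    refine ((hwp.snd.add hPW2).add (hQW2.const_mul ((2:ℝ)⁻¹))).congr_of_eventuallyEq ?_
    filter_upwards [hEV2, hw2, hevpos] with q h1 h2 hq0
    have hfq : f q ≠ 0 := hq0.ne'
    simp only [Pi.add_apply, Pi.sub_apply]
    rw [h2]
    field_simp
    linear_combination (-1) * h1
  have hcd : DifferentiableAt ℝ (fun q => pdx (fun q' => (W q').2) q) p := by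
    refine ((hwp.snd.add hPW2).sub (hQW2.const_mul ((2:ℝ)⁻¹))).congr_of_eventuallyEq ?_
    filter_upwards [hEV2, hw2, hevpos] with q h1 h2 hq0
    have hfq : f q ≠ 0 := hq0.ne'
    simp only [Pi.add_apply, Pi.sub_apply]
    rw [h2]
    field_simp
    linear_combination h1
  -- apply the core computation
  have key := core p (fun q => (W q).1) (fun q => (W q).2) f
      (fun q => (w q).1) (fun q => (w q).2)
      (fun q => pdx (fun q' => (W q').1) q) (fun q => pdt (fun q' => (W q').1) q)
      (fun q => pdx (fun q' => (W q').2) q) (fun q => pdt (fun q' => (W q').2) q)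
      (fun q => pdx f q) (fun q => pdt f q)
      hfnep hLu hLv hLf had hbd hcd hdd hfxd hftd hEV1 hEV2 hw1 hw2
  obtain ⟨k1, k2⟩ := key
  have k1' : (pdx (fun q => (w q).1) p - pdt (fun q => (w q).2) p) * f p
      = pdt f p * (w p).2 - pdx f p * (w p).1 := k1
  have k2' : (pdx (fun q => (w q).2) p - pdt (fun q => (w q).1) p) * f p
      = pdx f p * (w p).2 - pdt f p * (w p).1 := k2
  have hg1 : (dzbar w p).1 = (- hmul (hdiv (rz f p) (f p, 0)) (hconj (w p))).1 := by
    simp only [dzbar, hmul, hdiv, hinv, hconj, rz, neg_zero, zero_div, sub_zero,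
      mul_zero, zero_mul, add_zero, zero_add, mul_neg, neg_mul, Prod.fst_neg]
    field_simp
    linear_combination f p * k1'
  have hg2 : (dzbar w p).2 = (- hmul (hdiv (rz f p) (f p, 0)) (hconj (w p))).2 := by
    simp only [dzbar, hmul, hdiv, hinv, hconj, rz, neg_zero, zero_div, sub_zero,
      mul_zero, zero_mul, add_zero, zero_add, mul_neg, neg_mul, Prod.snd_neg]
    field_simp
    linear_combination f p * k2'
  exact Prod.ext hg1 hg2
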